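/- For an (e+1)-element subset S of {0,...,n} containing 0 and s ∈ {1,...,n-1}, define a 'hom' relation Hom(S,S') to hold iff there is a sequence 0 < s_1 < s'_1 < ... < s_k < s'_k (k ≥ 0) with S ∩ [s_i, s'_i] = {s_i} and S' = (S \ {s_1,...,s_k}) ∪ {s'_1,...,s'_k}. Define #(S, s) = |{t ∈ S : t > s}|. Then: if Hom(S,S') and Hom(S',S'') hold, and there exists s with s ∈ S ∩ S'' but s ∉ S', then Hom(S,S'') does not hold. -/

import Mathlib

/-- The tightness-criterion relation on subsets of `{0,...,n}` (based components of
basic dividing sets): `Hom(S,S') ≠ 0` iff there is a sequence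
`0 < s_1 < s'_1 < ⋯ < s_k < s'_k` (with `k ≥ 0` allowed, so `BHom S S` holds) with
`S ∩ [s_i, s'_i] = {s_i}` and `S' = (S \ {s_1,...,s_k}) ∪ {s'_1,...,s'_k}`. -/
def BHom (S S' : Finset ℕ) : Prop :=
  ∃ (k : ℕ) (a b : Fin k → ℕ),
    (∀ i, 0 < a i ∧ a i < b i) ∧
    (∀ i j : Fin k, i < j → b i < a j) ∧
    (∀ i, S.filter (fun x => a i ≤ x ∧ x ≤ b i) = {a i}) ∧
    S' = (S \ Finset.image a Finset.univ) ∪ Finset.image b Finset.univ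

def cnt (s : ℕ) (T : Finset ℕ) : ℕ := (T.filter (fun t => s < t)).card

lemma key (S S' : Finset ℕ) (h : BHom S S') (s : ℕ) :
    cnt s S ≤ cnt s S' ∧ (s ∈ S → s ∉ S' → cnt s S < cnt s S') ∧
      (s ∈ S → s ∈ S' → cnt s S' = cnt s S) := by
  obtain ⟨k, a, b, hab, hord, hint, rfl⟩ := h
  set A := Finset.image a Finset.univ with hA
  set B := Finset.image b Finset.univ with hB
  have ha_mono : StrictMono a := fun i j hij => lt_trans (hab i).2 (hord i j hij)
  have hb_mono : StrictMono b := fun i j hij => lt_trans (hord i j hij) (hab j).2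
  have haS : ∀ i, a i ∈ S := by
    intro i
    have : a i ∈ S.filter (fun x => a i ≤ x ∧ x ≤ b i) := by
      rw [hint i]; simp
    exact (Finset.mem_filter.mp this).1
  have hbS : ∀ i, b i ∉ S := by
    intro i hb
    have : b i ∈ S.filter (fun x => a i ≤ x ∧ x ≤ b i) :=
      Finset.mem_filter.mpr ⟨hb, le_of_lt (hab i).2, le_refl _⟩
    rw [hint i] at this
    simp at this
    exact absurd this (ne_of_gt (hab i).2)
  have hinterval : ∀ i, ∀ t ∈ S, a i ≤ t → t ≤ b i → t = a i := by
    intro i t ht h1 h2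
    have : t ∈ S.filter (fun x => a i ≤ x ∧ x ≤ b i) := Finset.mem_filter.mpr ⟨ht, h1, h2⟩
    rw [hint i] at this; simpa using this
  have hAS : A ⊆ S := by
    intro t ht
    rw [hA] at ht
    obtain ⟨i, _, rfl⟩ := Finset.mem_image.mp ht
    exact haS i
  have hBS : ∀ t ∈ B, t ∉ S := by
    intro t ht
    obtain ⟨i, _, rfl⟩ := Finset.mem_image.mp ht
    exact hbS i
  -- cardinalities
  set P : ℕ → Prop := fun t => s < t with hP
  have hsplit : cnt s ((S \ A) ∪ B) = cnt s (S \ A) + cnt s B := by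
    unfold cnt
    rw [Finset.filter_union]
    apply Finset.card_union_of_disjoint
    apply Finset.disjoint_left.mpr
    intro t ht1 ht2
    exact hBS t (Finset.filter_subset _ _ ht2) ((Finset.mem_sdiff.mp (Finset.filter_subset _ _ ht1)).1)
  have hsd : cnt s (S \ A) = cnt s S - cnt s A := by
    unfold cnt
    have heq : (S \ A).filter (fun t => s < t) = S.filter (fun t => s < t) \ A.filter (fun t => s < t) := by
      ext t
      simp only [Finset.mem_filter, Finset.mem_sdiff]
      constructor
      · rintro ⟨⟨h1, h2⟩, h3⟩; exact ⟨⟨h1, h3⟩, fun h => h2 h.1⟩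
      · rintro ⟨⟨h1, h3⟩, h2⟩; exact ⟨⟨h1, fun h => h2 ⟨h, h3⟩⟩, h3⟩
    rw [heq, Finset.card_sdiff_of_subset (Finset.monotone_filter_left _ hAS)]
  have hple : cnt s A ≤ cnt s S := by
    unfold cnt
    exact Finset.card_le_card (Finset.monotone_filter_left _ hAS)
  have hcA : cnt s A = (Finset.univ.filter (fun i : Fin k => s < a i)).card := by
    unfold cnt
    rw [hA, ← Finset.card_image_of_injective _ ha_mono.injective]
    congr 1
    ext t
    simp only [Finset.mem_filter, Finset.mem_image, Finset.mem_univ, true_and]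
    constructor
    · rintro ⟨⟨i, rfl⟩, h⟩; exact ⟨i, h, rfl⟩
    · rintro ⟨i, h, rfl⟩; exact ⟨⟨i, rfl⟩, h⟩
  have hcB : cnt s B = (Finset.univ.filter (fun i : Fin k => s < b i)).card := by
    unfold cnt
    rw [hB, ← Finset.card_image_of_injective _ hb_mono.injective]
    congr 1
    ext t
    simp only [Finset.mem_filter, Finset.mem_image, Finset.mem_univ, true_and]
    constructor
    · rintro ⟨⟨i, rfl⟩, h⟩; exact ⟨i, h, rfl⟩
    · rintro ⟨i, h, rfl⟩; exact ⟨⟨i, rfl⟩, h⟩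
  have hpq : cnt s A ≤ cnt s B := by
    rw [hcA, hcB]
    apply Finset.card_le_card
    apply Finset.monotone_filter_right
    intro i _ hi
    exact lt_trans hi (hab i).2
  refine ⟨?_, ?_, ?_⟩
  · rw [hsplit, hsd]; omega
  · intro hsS hs'
    have hsA : s ∈ A := by
      by_contra hsA
      exact hs' (Finset.mem_union_left _ (Finset.mem_sdiff.mpr ⟨hsS, hsA⟩))
    obtain ⟨i, _, hi⟩ := Finset.mem_image.mp hsA
    have hstrict : cnt s A < cnt s B := by
      rw [hcA, hcB]
      apply Finset.card_lt_card
      rw [Finset.ssubset_iff_of_subset (Finset.monotone_filter_right _ (fun i _ hi => lt_trans hi (hab i).2))]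
      refine ⟨i, Finset.mem_filter.mpr ⟨Finset.mem_univ _, ?_⟩, ?_⟩
      · exact hi ▸ (hab i).2
      · simp [hi]
    rw [hsplit, hsd]; omega
  · intro hsS hs'
    have hsA : s ∉ A := by
      intro hsA
      rcases Finset.mem_union.mp hs' with h | h
      · exact (Finset.mem_sdiff.mp h).2 hsA
      · exact hBS s h hsS
    have hqp : cnt s B ≤ cnt s A := by
      rw [hcA, hcB]
      apply Finset.card_le_card
      apply Finset.monotone_filter_right
      intro i _ hi
      by_contra hlt
      push_neg at hlt
      have := hinterval i s hsS hlt (le_of_lt hi)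
      exact hsA (Finset.mem_image.mpr ⟨i, Finset.mem_univ _, this.symm⟩)
    rw [hsplit, hsd]; omega

/-- Corollary 5.3 (composition obstruction): if `Hom(S,S')` and `Hom(S',S'')` are
nonzero and some label `s` lies in `S ∩ S''` but not in `S'`, then `Hom(S,S'') = 0`. -/
theorem stmt2 (n e : ℕ) (S S' S'' : Finset ℕ)
    (hS : S ⊆ Finset.range (n + 1)) (h0S : 0 ∈ S) (hcS : S.card = e + 1)
    (hS' : S' ⊆ Finset.range (n + 1)) (h0S' : 0 ∈ S') (hcS' : S'.card = e + 1)
    (hS'' : S'' ⊆ Finset.range (n + 1)) (h0S'' : 0 ∈ S'') (hcS'' : S''.card = e + 1)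
    (h1 : BHom S S') (h2 : BHom S' S'')
    (s : ℕ) (hs : s ∈ S) (hs'' : s ∈ S'') (hs' : s ∉ S') :
    ¬ BHom S S'' := by
  intro h3
  have k1 := (key S S' h1 s).2.1 hs hs'
  have k2 := (key S' S'' h2 s).1
  have k3 := (key S S'' h3 s).2.2 hs hs''
  omega
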